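/- For all formulas α, β ∈ Fm, the following are equivalent: (i) every algebra A with unary operation ¬ satisfying ¬¬a = a for all a ∈ A satisfies the equation α ≈ β (i.e., h(α) = h(β) for every homomorphism h : Fm → A); (ii) α ⊣⊢_N β (α ⊢_N β and β ⊢_N α); (iii) there exist x ∈ Var and n, k ∈ ℕ₀ with α = ¬ⁿx, β = ¬ᵏx and n ≡ k (mod 2). Consequently, the intrinsic variety of S_N is the class of all algebras satisfying x ≈ ¬¬x. -/
import Mathlib


/-- Formulas of the algebraic language with a single unary connective ¬,
built as the absolutely free algebra over a countably infinite set of variables. -/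
inductive Fm : Type where
  | var : ℕ → Fm
  | neg : Fm → Fm

/-- `negn n α` is ¬ⁿα: ¬⁰α = α and ¬ⁿα = ¬(¬ⁿ⁻¹α). -/
def negn : ℕ → Fm → Fm
  | 0, α => α
  | n + 1, α => Fm.neg (negn n α)

/-- The {¬}-fragment ⊢_N of classical propositional logic: Γ ⊢_N α iff every
homomorphism h from Fm to the two-element algebra 2_¬ = ⟨{0,1},¬⟩ (¬0 = 1, ¬1 = 0)
with h[Γ] ⊆ {1} satisfies h(α) = 1. -/
def DerivN (Γ : Set Fm) (α : Fm) : Prop :=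
  ∀ h : Fm → Bool, (∀ φ : Fm, h (Fm.neg φ) = !(h φ)) →
    (∀ γ ∈ Γ, h γ = true) → h α = true

def vOf : Fm → ℕ
  | Fm.var x => x
  | Fm.neg φ => vOf φ

def dOf : Fm → ℕ
  | Fm.var _ => 0
  | Fm.neg φ => dOf φ + 1

lemma decomp : ∀ φ : Fm, φ = negn (dOf φ) (Fm.var (vOf φ))
  | Fm.var x => rfl
  | Fm.neg φ => by simp [dOf, vOf, negn, ← decomp φ]

def ev (g : ℕ → Bool) : Fm → Bool
  | Fm.var x => g x
  | Fm.neg φ => !(ev g φ)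

lemma ev_neg (g : ℕ → Bool) (φ : Fm) : ev g (Fm.neg φ) = !(ev g φ) := rfl

lemma ev_negn (g : ℕ → Bool) (n : ℕ) (φ : Fm) :
    ev g (negn n φ) = xor (decide (n % 2 = 1)) (ev g φ) := by
  induction n with
  | zero => simp [negn]
  | succ n ih =>
      have : ev g (negn (n+1) φ) = !(ev g (negn n φ)) := rfl
      rw [this, ih]
      rcases Nat.mod_two_eq_zero_or_one n with h | h
      · have h2 : (n+1) % 2 = 1 := by omega
        simp [h, h2]
      · have h2 : (n+1) % 2 = 0 := by omega
        simp [h, h2]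

lemma hom_negn {A : Type} (neg : A → A) (h : Fm → A)
    (hh : ∀ φ : Fm, h (Fm.neg φ) = neg (h φ)) (n : ℕ) (φ : Fm) :
    h (negn n φ) = neg^[n] (h φ) := by
  induction n with
  | zero => rfl
  | succ n ih =>
      show h (Fm.neg (negn n φ)) = _
      rw [hh, ih, Function.iterate_succ_apply']

lemma iterate_inv {A : Type} (neg : A → A) (inv : ∀ a, neg (neg a) = a)
    (n : ℕ) (a : A) : neg^[n] a = if n % 2 = 0 then a else neg a := by
  induction n generalizing a with
  | zero => simp
  | succ n ih =>
      rw [Function.iterate_succ_apply, ih (neg a)]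
      rcases Nat.mod_two_eq_zero_or_one n with h | h
      · have h2 : (n+1) % 2 = 1 := by omega
        simp [h, h2, inv]
      · have h2 : (n+1) % 2 = 0 := by omega
        simp [h, h2, inv]

/-- The following are equivalent: (i) every algebra satisfying ¬¬a = a satisfies
α ≈ β; (ii) α ⊣⊢_N β; (iii) α = ¬ⁿx, β = ¬ᵏx with n ≡ k (mod 2).
Consequently the intrinsic variety of S_N is the class of algebras satisfying
x ≈ ¬¬x. -/
theorem stmt9 (α β : Fm) :
    ((∀ (A : Type) (neg : A → A), (∀ a : A, neg (neg a) = a) →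
        ∀ h : Fm → A, (∀ φ : Fm, h (Fm.neg φ) = neg (h φ)) → h α = h β) ↔
      (DerivN {α} β ∧ DerivN {β} α)) ∧
    ((DerivN {α} β ∧ DerivN {β} α) ↔
      ∃ (x n k : ℕ), α = negn n (Fm.var x) ∧ β = negn k (Fm.var x) ∧ n % 2 = k % 2) := by
  have h13 : (∃ (x n k : ℕ), α = negn n (Fm.var x) ∧ β = negn k (Fm.var x) ∧ n % 2 = k % 2) →
      (∀ (A : Type) (neg : A → A), (∀ a : A, neg (neg a) = a) →
        ∀ h : Fm → A, (∀ φ : Fm, h (Fm.neg φ) = neg (h φ)) → h α = h β) := by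
    rintro ⟨x, n, k, rfl, rfl, hnk⟩ A neg inv h hh
    rw [hom_negn neg h hh, hom_negn neg h hh, iterate_inv neg inv, iterate_inv neg inv, hnk]
  have h12 : (∀ (A : Type) (neg : A → A), (∀ a : A, neg (neg a) = a) →
        ∀ h : Fm → A, (∀ φ : Fm, h (Fm.neg φ) = neg (h φ)) → h α = h β) →
      (DerivN {α} β ∧ DerivN {β} α) := by
    intro H
    have key : ∀ h : Fm → Bool, (∀ φ : Fm, h (Fm.neg φ) = !(h φ)) → h α = h β :=
      fun h hh => H Bool Bool.not (by simp) h hh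
    constructor <;> intro h hh hΓ
    · rw [← key h hh]; exact hΓ α rfl
    · rw [key h hh]; exact hΓ β rfl
  have h23 : (DerivN {α} β ∧ DerivN {β} α) →
      (∃ (x n k : ℕ), α = negn n (Fm.var x) ∧ β = negn k (Fm.var x) ∧ n % 2 = k % 2) := by
    rintro ⟨hab, hba⟩
    have hα := decomp α
    have hβ := decomp β
    have key : ∀ g : ℕ → Bool, ev g α = ev g β := by
      intro g
      by_cases h1 : ev g α = true
      · rw [h1]; exact (hab (ev g) (ev_neg g) (by simpa using h1)).symm
      · by_cases h2 : ev g β = true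
        · exact absurd (hba (ev g) (ev_neg g) (by simpa using h2)) h1
        · simp only [Bool.not_eq_true] at h1 h2; rw [h1, h2]
    have evα : ∀ g, ev g α = xor (decide (dOf α % 2 = 1)) (g (vOf α)) := by
      intro g; conv_lhs => rw [hα]
      rw [ev_negn]; rfl
    have evβ : ∀ g, ev g β = xor (decide (dOf β % 2 = 1)) (g (vOf β)) := by
      intro g; conv_lhs => rw [hβ]
      rw [ev_negn]; rfl
    have hxy : vOf α = vOf β := by
      by_contra hne
      have t1 := key (fun z => if z = vOf α then true else false)
      have t2 := key (fun z => if z = vOf α then false else true)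
      have t3 := key (fun _ => true)
      rw [evα, evβ] at t1 t2 t3
      simp only [if_pos rfl, if_neg (Ne.symm hne)] at t1 t2
      rcases Nat.mod_two_eq_zero_or_one (dOf α) with h' | h' <;>
        rcases Nat.mod_two_eq_zero_or_one (dOf β) with h'' | h'' <;>
          simp [h', h''] at t1 t2 t3
    have hpar : dOf α % 2 = dOf β % 2 := by
      by_contra hne
      have t := key (fun _ => true)
      rw [evα, evβ] at t
      rcases Nat.mod_two_eq_zero_or_one (dOf α) with h' | h' <;>
        rcases Nat.mod_two_eq_zero_or_one (dOf β) with h'' | h'' <;>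
          simp [h', h''] at t hne <;> omega
    exact ⟨vOf α, dOf α, dOf β, hα, hxy ▸ hβ, hpar⟩
  exact ⟨⟨h12, fun h2 => h13 (h23 h2)⟩, ⟨h23, fun h3 => h12 (h13 h3)⟩⟩
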